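/- For any a > 0 and y ∈ ℝ, exp(-a²y²) = Σ_{n=0}^∞ (-1)^n a^{2n} / (2^{2n} n! (1+a²)^{n+1/2}) · H_{2n}(y), where H_{2n} denotes the classical physicists' Hermite polynomial, and the series converges absolutely. -/

import Mathlib

open Finset

/-- The classical physicists' Hermite polynomial
`H_n(x) = n! ∑_{j=0}^{⌊n/2⌋} (-1)^j/(j!(n-2j)!) (2x)^{n-2j}`. -/
noncomputable def hermitePhys (n : ℕ) (x : ℝ) : ℝ :=
  (n.factorial : ℝ) * ∑ j ∈ Finset.range (n / 2 + 1),
    (-1 : ℝ) ^ j / (j.factorial * (n - 2 * j).factorial) * (2 * x) ^ (n - 2 * j)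

open Polynomial

noncomputable def cc (a : ℝ) (n : ℕ) : ℝ :=
  (-1 : ℝ) ^ n * a ^ (2 * n) /
    (2 ^ (2 * n) * (n.factorial : ℝ) * (1 + a ^ 2) ^ ((n : ℝ) + 1 / 2))

noncomputable def gg (a y : ℝ) (n j : ℕ) : ℝ :=
  cc a n * ((2 * n).factorial : ℝ) *
    ((-1 : ℝ) ^ j / (j.factorial * ((2 * n - 2 * j).factorial)) * (2 * y) ^ (2 * n - 2 * j))

noncomputable def qq (a : ℝ) : ℝ := a ^ 2 / (1 + a ^ 2)

noncomputable def DD (a : ℝ) (m j : ℕ) : ℝ :=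
  (ascPochhammer ℝ j).eval ((1 / 2 : ℝ) + m) * (qq a) ^ j / j.factorial

noncomputable def KK (a y : ℝ) (m : ℕ) : ℝ :=
  (-1 : ℝ) ^ m * a ^ (2 * m) * (ascPochhammer ℝ m).eval (1 / 2 : ℝ) * (2 * y) ^ (2 * m) /
    (((2 * m).factorial : ℝ) * (1 + a ^ 2) ^ ((1 / 2 : ℝ) + m))

lemma herm_sum (a y : ℝ) (n : ℕ) :
    cc a n * hermitePhys (2 * n) y = ∑ j ∈ Finset.range (n + 1), gg a y n j := by
  rw [hermitePhys, show 2 * n / 2 = n from by omega, ← mul_assoc, Finset.mul_sum]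
  rfl

private lemma iter_deriv_one_sub_cpow (s : ℂ) :
    ∀ (n : ℕ) (z : ℂ), z ∈ Metric.ball (0:ℂ) 1 →
      iteratedDeriv n (fun w : ℂ => (1 - w) ^ (-s)) z
        = (ascPochhammer ℂ n).eval s * (1 - z) ^ (-(s + n)) := by
  intro n
  induction n with
  | zero => intro z hz; simp
  | succ n ih =>
    intro z hz
    have hball : Metric.ball (0:ℂ) 1 ∈ nhds z := (Metric.isOpen_ball).mem_nhds hz
    have heq : iteratedDeriv (n+1) (fun w : ℂ => (1 - w) ^ (-s)) z
        = deriv (fun w => (ascPochhammer ℂ n).eval s * (1 - w) ^ (-(s + n))) z := by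
      rw [iteratedDeriv_succ]
      apply Filter.EventuallyEq.deriv_eq
      filter_upwards [hball] with w hw
      exact ih w hw
    have hslit : (1 - z) ∈ Complex.slitPlane := by
      rw [Complex.mem_slitPlane_iff]
      left
      have : ‖z‖ < 1 := by simpa [Metric.mem_ball] using hz
      have := (Complex.abs_re_le_norm z).trans_lt this
      simp only [Complex.sub_re, Complex.one_re]
      cases abs_lt.mp this; linarith
    have hd : HasDerivAt (fun w : ℂ => (1 - w) ^ (-(s + n)))
        ((-(s+n)) * (1 - z) ^ (-(s+n) - 1) * (-1)) z := by
      exact ((hasDerivAt_id z).const_sub 1).cpow_const hslit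
    rw [heq, deriv_const_mul _ hd.differentiableAt, hd.deriv]
    rw [ascPochhammer_succ_right, eval_mul]
    push_cast
    simp only [eval_add, eval_X, eval_natCast]
    ring_nf

private lemma hasSum_one_sub_rpow (s x : ℝ) (hx0 : 0 ≤ x) (hx1 : x < 1) :
    HasSum (fun n : ℕ => (ascPochhammer ℝ n).eval s * x ^ n / n.factorial)
      ((1 - x) ^ (-s) : ℝ) := by
  have hdiff : DifferentiableOn ℂ (fun w : ℂ => (1 - w) ^ (-(s:ℂ))) (Metric.ball (0:ℂ) 1) := by
    intro z hz
    have hslit : (1 - z) ∈ Complex.slitPlane := by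
      rw [Complex.mem_slitPlane_iff]
      left
      have : ‖z‖ < 1 := by simpa [Metric.mem_ball] using hz
      have := (Complex.abs_re_le_norm z).trans_lt this
      simp only [Complex.sub_re, Complex.one_re]
      cases abs_lt.mp this; linarith
    exact (((hasDerivAt_id z).const_sub 1).cpow_const hslit).differentiableAt.differentiableWithinAt
  have hz : (x : ℂ) ∈ Metric.ball (0:ℂ) 1 := by
    simp [Metric.mem_ball, abs_of_nonneg hx0, Complex.norm_real, abs_lt]
    exact hx1
  have H := Complex.hasSum_taylorSeries_on_ball hdiff hz
  have Hterm : ∀ n : ℕ, ((n.factorial : ℂ))⁻¹ • ((x:ℂ) - 0) ^ n •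
        iteratedDeriv n (fun w : ℂ => (1 - w) ^ (-(s:ℂ))) 0
      = ((((ascPochhammer ℝ n).eval s * x ^ n / n.factorial : ℝ)) : ℂ) := by
    intro n
    rw [iter_deriv_one_sub_cpow _ n 0 (by simp)]
    have : (ascPochhammer ℂ n).eval (s:ℂ) = (((ascPochhammer ℝ n).eval s : ℝ) : ℂ) := by
      rw [← ascPochhammer_map (algebraMap ℝ ℂ), Polynomial.eval_map]
      exact Polynomial.eval₂_at_apply (algebraMap ℝ ℂ) s
    simp only [sub_zero, this, Complex.one_cpow, smul_eq_mul]
    push_cast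
    ring
  simp only [Hterm] at H
  have hfx : ((1:ℂ) - (x:ℂ)) ^ (-(s:ℂ)) = (((1 - x) ^ (-s) : ℝ) : ℂ) := by
    rw [show ((1:ℂ) - x) = (((1 - x : ℝ)):ℂ) by push_cast; ring,
      show (-(s:ℂ)) = ((-s : ℝ) : ℂ) by push_cast; ring,
      Complex.ofReal_cpow (by linarith)]
  rw [hfx] at H
  exact Complex.hasSum_ofReal.mp H

private lemma poch_pos {s : ℝ} (hs : 0 < s) (n : ℕ) : 0 < (ascPochhammer ℝ n).eval s := by
  induction n with
  | zero => simp
  | succ n ih =>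
    rw [ascPochhammer_succ_right, Polynomial.eval_mul, Polynomial.eval_add, Polynomial.eval_X,
      Polynomial.eval_natCast]
    positivity

private lemma fact_two_mul (k : ℕ) :
    ((2 * k).factorial : ℝ) = 4 ^ k * k.factorial * (ascPochhammer ℝ k).eval (1/2 : ℝ) := by
  induction k with
  | zero => simp
  | succ k ih =>
    have h1 : 2 * (k + 1) = (2 * k + 1) + 1 := by ring
    rw [h1, Nat.factorial_succ, Nat.factorial_succ, ascPochhammer_succ_right,
      Polynomial.eval_mul, Polynomial.eval_add, Polynomial.eval_X, Polynomial.eval_natCast,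
      Nat.factorial_succ]
    push_cast
    rw [ih]
    ring

private lemma poch_split (m j : ℕ) :
    (ascPochhammer ℝ (m + j)).eval (1/2 : ℝ)
      = (ascPochhammer ℝ m).eval (1/2 : ℝ) * (ascPochhammer ℝ j).eval ((1/2 : ℝ) + m) := by
  rw [← ascPochhammer_mul, Polynomial.eval_mul, Polynomial.eval_comp, Polynomial.eval_add,
    Polynomial.eval_X, Polynomial.eval_natCast]

lemma hA0 (a : ℝ) : (0:ℝ) < 1 + a ^ 2 := by positivity

lemma hq0 (a : ℝ) : 0 ≤ qq a := by unfold qq; positivity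

lemma hq1 (a : ℝ) : qq a < 1 := by
  unfold qq
  rw [div_lt_one (hA0 a)]
  linarith [sq_nonneg a]

lemma DD_hasSum (a : ℝ) (m : ℕ) :
    HasSum (DD a m) ((1 + a ^ 2) ^ ((1 / 2 : ℝ) + m)) := by
  have h := hasSum_one_sub_rpow ((1/2 : ℝ) + m) (qq a) (hq0 a) (hq1 a)
  have h1q : 1 - qq a = (1 + a ^ 2)⁻¹ := by
    unfold qq
    field_simp
    ring
  have heq : (1 - qq a) ^ (-((1/2:ℝ) + m)) = (1 + a^2) ^ ((1/2:ℝ) + m) := by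
    rw [h1q, Real.rpow_neg (by positivity), Real.inv_rpow (hA0 a).le, inv_inv]
  rw [heq] at h
  exact h

lemma gg_eq (a y : ℝ) (m j : ℕ) : gg a y (m + j) j = KK a y m * DD a m j := by
  have hA := hA0 a
  have h2m : 2 * (m + j) - 2 * j = 2 * m := by omega
  unfold gg cc KK DD qq
  rw [h2m]
  have hrpow : (1 + a^2 : ℝ) ^ (((m + j : ℕ) : ℝ) + 1/2)
      = (1 + a^2) ^ ((1/2:ℝ) + (m:ℝ)) * (1 + a^2) ^ (j:ℕ) := by
    rw [← Real.rpow_natCast (1+a^2) j, ← Real.rpow_add hA]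
    congr 1
    push_cast
    ring
  rw [hrpow, fact_two_mul (m+j), poch_split m j, fact_two_mul m]
  have hrp0 : (0:ℝ) < (1 + a^2) ^ ((1/2:ℝ) + (m:ℝ)) := Real.rpow_pos_of_pos hA _
  have hf1 : ((m+j).factorial : ℝ) ≠ 0 := Nat.cast_ne_zero.mpr (Nat.factorial_ne_zero _)
  have hf2 : (j.factorial : ℝ) ≠ 0 := Nat.cast_ne_zero.mpr (Nat.factorial_ne_zero _)
  have hf3 : (m.factorial : ℝ) ≠ 0 := Nat.cast_ne_zero.mpr (Nat.factorial_ne_zero _)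
  have hAj : ((1:ℝ) + a^2) ^ (j:ℕ) ≠ 0 := by positivity
  have h4 : ((4:ℝ)) ^ (m+j) ≠ 0 := by positivity
  have h2 : ((2:ℝ)) ^ (2*(m+j)) = 4 ^ (m+j) := by
    rw [pow_mul]; norm_num
  have hp1 : (ascPochhammer ℝ m).eval (1/2:ℝ) ≠ 0 := (poch_pos one_half_pos m).ne'
  have hp2 : (ascPochhammer ℝ j).eval ((1/2:ℝ)+(m:ℝ)) ≠ 0 :=
    (poch_pos (by positivity) j).ne'
  have hrp0' : ((1+a^2:ℝ)) ^ ((1/2:ℝ)+(m:ℝ)) ≠ 0 := hrp0.ne'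
  have hA' : (1+a^2:ℝ) ≠ 0 := hA.ne'
  rw [h2, pow_add ((-1):ℝ) m j]
  field_simp
  ring_nf
  have hjj : ((-1:ℝ)) ^ (j*2) = 1 := by rw [mul_comm, pow_mul]; norm_num
  rw [hjj]
  have hinv : ((1:ℝ) + a^2)⁻¹ ^ j * (1 + a^2) ^ j = 1 := by rw [inv_pow, inv_mul_cancel₀ hAj]
  linear_combination (-(a ^ (j * 2) * a ^ (m * 2) * (ascPochhammer ℝ j).eval (1/2 + (m:ℝ)) *
    y ^ (m * 2) * 2 ^ (m * 2))) * hinv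

lemma DD_nonneg (a : ℝ) (m j : ℕ) : 0 ≤ DD a m j := by
  unfold DD
  have h := poch_pos (show (0:ℝ) < 1/2 + m by positivity) j
  have := hq0 a
  positivity

lemma KK_mul (a y : ℝ) (m : ℕ) :
    KK a y m * (1 + a ^ 2) ^ ((1/2:ℝ) + m) = (-(a^2 * y^2)) ^ m / m.factorial := by
  unfold KK
  rw [fact_two_mul m]
  have hA := hA0 a
  have hrp0 : (0:ℝ) < (1 + a^2) ^ ((1/2:ℝ) + (m:ℝ)) := Real.rpow_pos_of_pos hA _
  have hp1 : (ascPochhammer ℝ m).eval (1/2:ℝ) ≠ 0 := (poch_pos one_half_pos m).ne'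
  have hf3 : (m.factorial : ℝ) ≠ 0 := Nat.cast_ne_zero.mpr (Nat.factorial_ne_zero _)
  have h1 : ((2:ℝ) * y) ^ (2*m) = 4^m * (y^2)^m := by
    rw [pow_mul, show ((2:ℝ)*y)^2 = 4 * y^2 by ring, mul_pow]
  have h2 : (a:ℝ) ^ (2*m) = (a^2)^m := by rw [pow_mul]
  have h3 : (-(a^2 * y^2) : ℝ) ^ m = (-1)^m * (a^2)^m * (y^2)^m := by
    rw [show -(a^2*y^2) = (-1) * a^2 * y^2 by ring, mul_pow, mul_pow]
  rw [h1, h2, h3]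
  field_simp

lemma KK_abs (a y : ℝ) (m : ℕ) :
    |KK a y m| * (1 + a ^ 2) ^ ((1/2:ℝ) + m) = (a^2 * y^2) ^ m / m.factorial := by
  have hrp0 : (0:ℝ) < (1 + a^2) ^ ((1/2:ℝ) + (m:ℝ)) := Real.rpow_pos_of_pos (hA0 a) _
  rw [show (1 + a ^ 2 : ℝ) ^ ((1/2:ℝ) + m) = |(1 + a ^ 2) ^ ((1/2:ℝ) + (m:ℝ))| from
    (abs_of_pos hrp0).symm, ← abs_mul, KK_mul, abs_div, abs_pow, abs_neg,
    abs_of_nonneg (by positivity : (0:ℝ) ≤ a^2*y^2), Nat.abs_cast]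

lemma gg_hasSum (a y : ℝ) (m : ℕ) :
    HasSum (fun j => gg a y (m+j) j) ((-(a^2 * y^2)) ^ m / m.factorial) := by
  have h := (DD_hasSum a m).mul_left (KK a y m)
  rw [KK_mul] at h
  exact h.congr_fun fun j => gg_eq a y m j

lemma gg_abs_hasSum (a y : ℝ) (m : ℕ) :
    HasSum (fun j => |gg a y (m+j) j|) ((a^2 * y^2) ^ m / m.factorial) := by
  have h := (DD_hasSum a m).mul_left |KK a y m|
  rw [KK_abs] at h
  refine h.congr_fun fun j => ?_
  rw [gg_eq, abs_mul, abs_of_nonneg (DD_nonneg a m j)]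

/-- The shifted double-index function. -/
noncomputable def PP (a y : ℝ) (p : ℕ × ℕ) : ℝ := gg a y (p.1 + p.2) p.2

lemma PP_abs_summable (a y : ℝ) : Summable (fun p => |PP a y p|) := by
  rw [summable_prod_of_nonneg (fun p => abs_nonneg _)]
  refine ⟨fun m => (gg_abs_hasSum a y m).summable, ?_⟩
  have : ∀ m : ℕ, ∑' j, |PP a y (m, j)| = (a^2*y^2)^m / m.factorial :=
    fun m => (gg_abs_hasSum a y m).tsum_eq
  rw [summable_congr this]
  exact Real.summable_pow_div_factorial _

lemma PP_summable (a y : ℝ) : Summable (PP a y) :=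
  (PP_abs_summable a y).of_abs

lemma PP_tsum (a y : ℝ) : ∑' p, PP a y p = Real.exp (-(a^2 * y^2)) := by
  rw [Summable.tsum_prod (PP_summable a y)]
  have : ∀ m : ℕ, ∑' j, PP a y (m, j) = (-(a^2*y^2))^m / m.factorial :=
    fun m => (gg_hasSum a y m).tsum_eq
  rw [tsum_congr this, Real.exp_eq_exp_ℝ, NormedSpace.exp_eq_tsum_div]

/-- The other parametrization. -/
noncomputable def QQ (a y : ℝ) (p : ℕ × ℕ) : ℝ :=
  if p.2 ≤ p.1 then gg a y p.1 p.2 else 0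

def ii : ℕ × ℕ → ℕ × ℕ := fun p => (p.1 + p.2, p.2)

lemma ii_inj : Function.Injective ii := by
  rintro ⟨m, j⟩ ⟨m', j'⟩ h
  simp only [ii, Prod.mk.injEq] at h
  obtain ⟨h1, h2⟩ := h
  subst h2
  exact Prod.ext (by omega) rfl

lemma ii_range {p : ℕ × ℕ} (hp : p ∉ Set.range ii) : ¬ p.2 ≤ p.1 := by
  intro h
  have h1 : p.1 - p.2 + p.2 = p.1 := by omega
  exact hp ⟨(p.1 - p.2, p.2), by simp [ii, h1]⟩

lemma QQ_comp (a y : ℝ) (p : ℕ × ℕ) : QQ a y (ii p) = PP a y p := by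
  simp [QQ, ii, PP]

lemma QQ_summable (a y : ℝ) : Summable (QQ a y) := by
  rw [← ii_inj.summable_iff (f := QQ a y)
    (fun p hp => by unfold QQ; rw [if_neg (ii_range hp)])]
  exact (PP_summable a y).congr fun p => (QQ_comp a y p).symm

lemma QQ_abs_summable (a y : ℝ) : Summable (fun p => |QQ a y p|) := by
  rw [← ii_inj.summable_iff (f := fun p => |QQ a y p|)
    (fun p hp => by simp only [QQ]; rw [if_neg (ii_range hp), abs_zero])]
  exact (PP_abs_summable a y).congr fun p => by rw [Function.comp_apply, QQ_comp]

lemma QQ_tsum (a y : ℝ) : ∑' p, QQ a y p = Real.exp (-(a^2 * y^2)) := by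
  have hsupp : Function.support (QQ a y) ⊆ Set.range ii := by
    intro p hp
    by_contra hr
    apply hp
    unfold QQ
    rw [if_neg (ii_range hr)]
  rw [← ii_inj.tsum_eq hsupp, ← PP_tsum a y]
  exact tsum_congr fun p => QQ_comp a y p

lemma QQ_row (a y : ℝ) (n : ℕ) :
    ∑' j, QQ a y (n, j) = cc a n * hermitePhys (2*n) y := by
  rw [tsum_eq_sum (s := Finset.range (n+1))
    (fun j hj => by simp only [QQ]; rw [if_neg (by simp at hj; omega)]), herm_sum]
  exact Finset.sum_congr rfl fun j hj =>
    by simp only [QQ]; rw [if_pos (by simp at hj; omega)]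

lemma QQ_abs_row (a y : ℝ) (n : ℕ) :
    |cc a n * hermitePhys (2*n) y| ≤ ∑' j, |QQ a y (n, j)| := by
  rw [tsum_eq_sum (s := Finset.range (n+1))
    (fun j hj => by simp only [QQ]; rw [if_neg (by simp at hj; omega), abs_zero])]
  rw [herm_sum]
  refine (Finset.abs_sum_le_sum_abs _ _).trans (le_of_eq ?_)
  exact Finset.sum_congr rfl fun j hj =>
    by simp only [QQ]; rw [if_pos (by simp at hj; omega)]


/-- Mehler-type expansion: for `a > 0` and `y ∈ ℝ`,
`exp(-a²y²) = ∑_{n≥0} (-1)^n a^{2n} / (2^{2n} n! (1+a²)^{n+1/2}) H_{2n}(y)`,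
with absolute convergence. -/
theorem exp_neg_sq_eq_tsum_hermitePhys (a y : ℝ) (ha : 0 < a) :
    Summable (fun n : ℕ =>
      |(-1 : ℝ) ^ n * a ^ (2 * n) /
          (2 ^ (2 * n) * (n.factorial : ℝ) * (1 + a ^ 2) ^ ((n : ℝ) + 1 / 2)) *
        hermitePhys (2 * n) y|) ∧
    Real.exp (-(a ^ 2 * y ^ 2))
      = ∑' n : ℕ, (-1 : ℝ) ^ n * a ^ (2 * n) /
          (2 ^ (2 * n) * (n.factorial : ℝ) * (1 + a ^ 2) ^ ((n : ℝ) + 1 / 2)) *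
        hermitePhys (2 * n) y := by
  have hcc : ∀ n : ℕ, (-1 : ℝ) ^ n * a ^ (2 * n) /
      (2 ^ (2 * n) * (n.factorial : ℝ) * (1 + a ^ 2) ^ ((n : ℝ) + 1 / 2)) *
        hermitePhys (2 * n) y = cc a n * hermitePhys (2 * n) y := fun n => rfl
  constructor
  · have h1 := QQ_abs_summable a y
    have h2 : Summable fun n => ∑' j, |QQ a y (n, j)| :=
      ((summable_prod_of_nonneg (fun p => abs_nonneg _)).mp h1).2
    refine Summable.of_nonneg_of_le (fun n => abs_nonneg _) (fun n => ?_) h2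
    rw [hcc]
    exact QQ_abs_row a y n
  · have h := QQ_tsum a y
    rw [Summable.tsum_prod (QQ_summable a y)] at h
    rw [← h]
    exact tsum_congr fun n => by rw [hcc, QQ_row]
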